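/- Let G be an abelian group with subgroups S⁰ ⊆ S⁺ ∩ S⁻, M⁰, M⁺, M⁻, E such that M* = S* ∩ E for * ∈ {0,+,−}, S⁰ = S⁺ ∩ S⁻, and S⁺ + S⁻ = S with E ⊆ S. Setting κ* = S*/M* and Ш = S/E, if additionally M⁺ + M⁻ = E, then there is a short exact sequence 0 → κ⁰ → κ⁺ × κ⁻ → Ш → 0, where the first map is induced by the diagonal inclusion and the second by (s⁺ mod E, s⁻ mod E) ↦ s⁺ − s⁻ mod E (up to sign conventions). -/
import Mathlib


theorem stmt_15 {G : Type*} [AddCommGroup G] (S Sp Sm S0 E : AddSubgroup G)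
    (hS0 : S0 = Sp ⊓ Sm) (hS : Sp ⊔ Sm = S) (hE : E ≤ S)
    (hle1 : S0 ≤ Sp) (hle2 : S0 ≤ Sm) (hle3 : Sp ≤ S) (hle4 : Sm ≤ S)
    (hM : (Sp ⊓ E) ⊔ (Sm ⊓ E) = E) :
    ∃ (f : ↥S0 ⧸ (S0 ⊓ E).addSubgroupOf S0 →+
          (↥Sp ⧸ (Sp ⊓ E).addSubgroupOf Sp) × (↥Sm ⧸ (Sm ⊓ E).addSubgroupOf Sm))
      (g : (↥Sp ⧸ (Sp ⊓ E).addSubgroupOf Sp) × (↥Sm ⧸ (Sm ⊓ E).addSubgroupOf Sm) →+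
          ↥S ⧸ E.addSubgroupOf S),
      (∀ x : ↥S0, f (QuotientAddGroup.mk x) =
        (QuotientAddGroup.mk (AddSubgroup.inclusion hle1 x),
         QuotientAddGroup.mk (AddSubgroup.inclusion hle2 x))) ∧
      (∀ (y : ↥Sp) (z : ↥Sm),
        g (QuotientAddGroup.mk y, QuotientAddGroup.mk z) =
          QuotientAddGroup.mk (AddSubgroup.inclusion hle3 y) -
          QuotientAddGroup.mk (AddSubgroup.inclusion hle4 z)) ∧
      Function.Injective f ∧ Function.Surjective g ∧
      (∀ w, g w = 0 ↔ w ∈ Set.range f) := by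
  classical
  -- the map S0 → κ⁺ × κ⁻
  let fp : ↥S0 →+ ↥Sp ⧸ (Sp ⊓ E).addSubgroupOf Sp :=
    (QuotientAddGroup.mk' _).comp (AddSubgroup.inclusion hle1)
  let fm : ↥S0 →+ ↥Sm ⧸ (Sm ⊓ E).addSubgroupOf Sm :=
    (QuotientAddGroup.mk' _).comp (AddSubgroup.inclusion hle2)
  have hkerf : (S0 ⊓ E).addSubgroupOf S0 ≤ (fp.prod fm).ker := by
    intro x hx
    rw [AddSubgroup.mem_addSubgroupOf] at hx
    have h1 : AddSubgroup.inclusion hle1 x ∈ (Sp ⊓ E).addSubgroupOf Sp := by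
      rw [AddSubgroup.mem_addSubgroupOf]
      exact ⟨hle1 x.2, hx.2⟩
    have h2 : AddSubgroup.inclusion hle2 x ∈ (Sm ⊓ E).addSubgroupOf Sm := by
      rw [AddSubgroup.mem_addSubgroupOf]
      exact ⟨hle2 x.2, hx.2⟩
    simp only [AddMonoidHom.mem_ker, AddMonoidHom.prod_apply, Prod.ext_iff,
      AddMonoidHom.comp_apply, QuotientAddGroup.mk'_apply, fp, fm, Prod.fst_zero,
      Prod.snd_zero, QuotientAddGroup.eq_zero_iff]
    exact ⟨h1, h2⟩
  let f := QuotientAddGroup.lift _ (fp.prod fm) hkerf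
  -- the map κ⁺ × κ⁻ → Ш
  have hkerp : (Sp ⊓ E).addSubgroupOf Sp ≤
      ((QuotientAddGroup.mk' (E.addSubgroupOf S)).comp (AddSubgroup.inclusion hle3)).ker := by
    intro y hy
    rw [AddSubgroup.mem_addSubgroupOf] at hy
    simp only [AddMonoidHom.mem_ker, AddMonoidHom.comp_apply, QuotientAddGroup.mk'_apply,
      QuotientAddGroup.eq_zero_iff, AddSubgroup.mem_addSubgroupOf]
    exact hy.2
  have hkerm : (Sm ⊓ E).addSubgroupOf Sm ≤
      ((QuotientAddGroup.mk' (E.addSubgroupOf S)).comp (AddSubgroup.inclusion hle4)).ker := by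
    intro y hy
    rw [AddSubgroup.mem_addSubgroupOf] at hy
    simp only [AddMonoidHom.mem_ker, AddMonoidHom.comp_apply, QuotientAddGroup.mk'_apply,
      QuotientAddGroup.eq_zero_iff, AddSubgroup.mem_addSubgroupOf]
    exact hy.2
  let gp := QuotientAddGroup.lift _ _ hkerp
  let gm := QuotientAddGroup.lift _ _ hkerm
  let g := gp.comp (AddMonoidHom.fst _ _) - gm.comp (AddMonoidHom.snd _ _)
  have hfval : ∀ x : ↥S0, f (QuotientAddGroup.mk x) =
      (QuotientAddGroup.mk (AddSubgroup.inclusion hle1 x),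
       QuotientAddGroup.mk (AddSubgroup.inclusion hle2 x)) := fun _ => rfl
  have hgval : ∀ (y : ↥Sp) (z : ↥Sm),
      g (QuotientAddGroup.mk y, QuotientAddGroup.mk z) =
        QuotientAddGroup.mk (AddSubgroup.inclusion hle3 y) -
        QuotientAddGroup.mk (AddSubgroup.inclusion hle4 z) := fun _ _ => rfl
  refine ⟨f, g, hfval, hgval, ?_, ?_, ?_⟩
  · -- injectivity of f
    rw [injective_iff_map_eq_zero]
    intro a
    induction a using QuotientAddGroup.induction_on with
    | H x =>
      intro hfx
      have h1 : fp x = 0 ∧ fm x = 0 := by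
        have := congrArg Prod.fst hfx
        have := congrArg Prod.snd hfx
        exact ⟨‹_ = (0:_ × _).fst›, ‹_ = (0:_ × _).snd›⟩
      have hE1 : (x : G) ∈ E := by
        have := h1.1
        simp only [fp, AddMonoidHom.comp_apply, QuotientAddGroup.mk'_apply,
          QuotientAddGroup.eq_zero_iff, AddSubgroup.mem_addSubgroupOf] at this
        exact this.2
      rw [QuotientAddGroup.eq_zero_iff, AddSubgroup.mem_addSubgroupOf]
      exact ⟨x.2, hE1⟩
  · -- surjectivity of g
    intro w
    induction w using QuotientAddGroup.induction_on with
    | H s =>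
      have hs : (s : G) ∈ Sp ⊔ Sm := by rw [hS]; exact s.2
      rcases AddSubgroup.mem_sup.mp hs with ⟨p, hp, m, hm, hpm⟩
      refine ⟨(QuotientAddGroup.mk ⟨p, hp⟩, QuotientAddGroup.mk ⟨-m, neg_mem hm⟩), ?_⟩
      rw [hgval, ← QuotientAddGroup.mk_sub]
      congr 1
      apply Subtype.ext
      show p - -m = (s : G)
      rw [sub_neg_eq_add, hpm]
  · -- exactness
    intro w
    constructor
    · induction w using Prod.rec with
      | mk wp wm =>
        induction wp using QuotientAddGroup.induction_on with
        | H y =>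
          induction wm using QuotientAddGroup.induction_on with
          | H z =>
            intro hg
            rw [hgval] at hg
            have hg' := hg
            rw [← QuotientAddGroup.mk_sub, QuotientAddGroup.eq_zero_iff,
              AddSubgroup.mem_addSubgroupOf] at hg'
            have hyz : (y : G) - z ∈ (Sp ⊓ E) ⊔ (Sm ⊓ E) := by rw [hM]; exact hg'
            rcases AddSubgroup.mem_sup.mp hyz with ⟨a, ha, b, hb, hab⟩
            have hx0p : (y : G) - a ∈ Sp := sub_mem y.2 ha.1
            have hx0m : (y : G) - a ∈ Sm := by
              have hb' : b = (y : G) - (z : G) - a := by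
                rw [eq_sub_iff_add_eq, add_comm]; exact hab
              have : (y : G) - a = (z : G) + b := by rw [hb']; abel
              rw [this]
              exact add_mem z.2 hb.1
            have hx0 : (y : G) - a ∈ S0 := by rw [hS0]; exact ⟨hx0p, hx0m⟩
            refine ⟨QuotientAddGroup.mk ⟨(y : G) - a, hx0⟩, ?_⟩
            rw [hfval]
            refine Prod.ext ?_ ?_
            · rw [QuotientAddGroup.eq]
              rw [AddSubgroup.mem_addSubgroupOf]
              show -((y : G) - a) + y ∈ Sp ⊓ E
              have : -((y : G) - a) + (y : G) = a := by abel
              rw [this]; exact ha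
            · rw [QuotientAddGroup.eq]
              rw [AddSubgroup.mem_addSubgroupOf]
              show -((y : G) - a) + z ∈ Sm ⊓ E
              have hb' : b = (y : G) - (z : G) - a := by
                rw [eq_sub_iff_add_eq, add_comm]; exact hab
              have : -((y : G) - a) + (z : G) = -b := by rw [hb']; abel
              rw [this]; exact neg_mem hb
    · rintro ⟨v, rfl⟩
      induction v using QuotientAddGroup.induction_on with
      | H x =>
        rw [hfval, hgval, sub_eq_zero]
        congr 1
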